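/- Let $\lambda, \varepsilon \in \mathbb{C}$, let $Y = \begin{pmatrix} \lambda & 1 \\ 0 & \lambda + \varepsilon \end{pmatrix}$, and let $X = \begin{pmatrix} x_{11} & x_{12} \\ x_{21} & x_{22} \end{pmatrix}$ satisfy $\varepsilon^2 x_{21} x_{12} - \varepsilon x_{21}(x_{22} - x_{11}) + 1 - x_{21}^2 = 0$. Then there exists an invertible $2 \times 2$ complex matrix $G$ with $G Y G^{-1} = Y$ such that the $(1,2)$-entry of $G X G^{-1}$ equals $0$. -/

import Mathlib

theorem canonical_representative_with_zero_entry
    (l e x11 x12 x21 x22 : ℂ)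
    (h : e ^ 2 * x21 * x12 - e * x21 * (x22 - x11) + 1 - x21 ^ 2 = 0)
    (Y X : Matrix (Fin 2) (Fin 2) ℂ)
    (hY : Y = !![l, 1; 0, l + e]) (hX : X = !![x11, x12; x21, x22]) :
    ∃ G : Matrix (Fin 2) (Fin 2) ℂ, IsUnit G ∧ G * Y * G⁻¹ = Y ∧
      (G * X * G⁻¹) 0 1 = 0 := by
  have hx21 : x21 ≠ 0 := by
    intro h0
    rw [h0] at h
    simp at h
  obtain ⟨s, hs⟩ : ∃ s : ℂ, s ^ 2 = (x22 - x11) ^ 2 + 4 * x21 * x12 :=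
    IsAlgClosed.exists_pow_nat_eq _ (n := 2) (by norm_num)
  have hroot : ∃ r : ℂ, x21 * r ^ 2 - (x22 - x11) * r - x12 = 0 ∧ 1 + r * e ≠ 0 := by
    have hq1 : x21 * (((x22 - x11) + s) / (2 * x21)) ^ 2
        - (x22 - x11) * (((x22 - x11) + s) / (2 * x21)) - x12 = 0 := by
      field_simp
      linear_combination hs
    have hq2 : x21 * (((x22 - x11) - s) / (2 * x21)) ^ 2
        - (x22 - x11) * (((x22 - x11) - s) / (2 * x21)) - x12 = 0 := by
      field_simp
      linear_combination hs
    by_cases h1 : 1 + (((x22 - x11) + s) / (2 * x21)) * e ≠ 0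
    · exact ⟨_, hq1, h1⟩
    by_cases h2 : 1 + (((x22 - x11) - s) / (2 * x21)) * e ≠ 0
    · exact ⟨_, hq2, h2⟩
    exfalso
    push_neg at h1 h2
    have hA : 2 * x21 + ((x22 - x11) + s) * e = 0 := by
      have := h1
      field_simp at this
      linear_combination this
    have hB : 2 * x21 + ((x22 - x11) - s) * e = 0 := by
      have := h2
      field_simp at this
      linear_combination this
    have he : e ≠ 0 := by
      intro he0
      rw [he0] at hA
      simp at hA
      exact hx21 hA
    have hs0 : s = 0 := by
      have h2se : 2 * s * e = 0 := by linear_combination hA - hB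
      rcases mul_eq_zero.mp h2se with h' | h'
      · rcases mul_eq_zero.mp h' with h'' | h''
        · norm_num at h''
        · exact h''
      · exact absurd h' he
    rw [hs0] at hA hs
    have h4 : (4 : ℂ) = 0 := by
      linear_combination 4 * h + e ^ 2 * hs + (e * (x22 - x11) + 2 * x21) * hA
    norm_num at h4
  obtain ⟨r, hr, hre⟩ := hroot
  refine ⟨!![1, r; 0, 1 + r * e], ?_, ?_, ?_⟩
  · rw [Matrix.isUnit_iff_isUnit_det, Matrix.det_fin_two_of]
    simpa using isUnit_iff_ne_zero.mpr hre
  · have hBinv : (!![1, r; 0, 1 + r * e] : Matrix (Fin 2) (Fin 2) ℂ)⁻¹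
        = !![1, -r / (1 + r * e); 0, 1 / (1 + r * e)] := by
      apply Matrix.inv_eq_right_inv
      ext i j
      fin_cases i <;> fin_cases j <;>
        simp [Matrix.mul_fin_two, Matrix.one_fin_two] <;> field_simp <;> ring
    rw [hBinv, hY, Matrix.mul_fin_two, Matrix.mul_fin_two]
    ext i j
    fin_cases i <;> fin_cases j <;> simp <;> field_simp <;> ring
  · have hBinv : (!![1, r; 0, 1 + r * e] : Matrix (Fin 2) (Fin 2) ℂ)⁻¹
        = !![1, -r / (1 + r * e); 0, 1 / (1 + r * e)] := by
      apply Matrix.inv_eq_right_inv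
      ext i j
      fin_cases i <;> fin_cases j <;>
        simp [Matrix.mul_fin_two, Matrix.one_fin_two] <;> field_simp <;> ring
    rw [hBinv, hX, Matrix.mul_fin_two, Matrix.mul_fin_two]
    simp only [Matrix.cons_val', Matrix.cons_val_one, Matrix.head_cons, Matrix.empty_val',
      Matrix.cons_val_fin_one, Matrix.cons_val_zero, Matrix.head_fin_const, Matrix.of_apply]
    field_simp
    linear_combination (-1 : ℂ) * hr
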